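/- For fixed s ∈ (0,1) and z = 1/(sn), the susceptibility satisfies χ_z^{(n)} ∼ s √(2πn) e^{(|log s| + s − 1)n} as n → ∞, and the exponent |log s| + s − 1 is strictly positive for s ∈ (0,1). -/

import Mathlib

open Finset Filter Real

/-- `c_N^{(n)} = (n-1)!/(n-1-N)!`, the number of `N`-step self-avoiding walks on `K_n`. -/
noncomputable def sawCount (n N : ℕ) : ℝ :=
  (Nat.factorial (n - 1) : ℝ) / (Nat.factorial (n - 1 - N) : ℝ)

/-- The susceptibility `χ_z^{(n)} = ∑_{N=0}^{n-1} c_N^{(n)} z^N`. -/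
noncomputable def chi (n : ℕ) (z : ℝ) : ℝ :=
  ∑ N ∈ Finset.range n, sawCount n N * z ^ N

open Nat in
private lemma exp_hasSum (x : ℝ) : HasSum (fun k : ℕ => x ^ k / k !) (Real.exp x) := by
  rw [Real.exp_eq_exp_ℝ]
  exact NormedSpace.expSeries_div_hasSum_exp x

open Nat in
private lemma chi_eq (x : ℝ) (hx : 0 < x) (n : ℕ) :
    chi n (1/x) = ((n-1)! : ℝ) / x ^ (n-1) * ∑ k ∈ Finset.range n, x ^ k / k ! := by
  unfold chi sawCount
  rw [← Finset.sum_range_reflect, Finset.mul_sum]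
  refine Finset.sum_congr rfl fun j hj => ?_
  rw [Finset.mem_range] at hj
  have hj' : j ≤ n - 1 := Nat.le_sub_one_of_lt hj
  rw [Nat.sub_sub_self hj']
  have hpow : x ^ (n-1-j) * x ^ j = x ^ (n-1) := by
    rw [← pow_add, Nat.sub_add_cancel hj']
  have hf : (j ! : ℝ) ≠ 0 := by positivity
  rw [one_div, inv_pow]
  field_simp
  rw [← hpow]

open Nat in
private lemma ratio_eq (s : ℝ) (hs0 : 0 < s) (n : ℕ) (hn : 1 ≤ n) :
    ((n-1)! : ℝ) / (s * n) ^ (n-1) / (s * Real.sqrt (2*π*n) * Real.exp ((-Real.log s + s - 1) * n)) =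
      Stirling.stirlingSeq n / (Real.sqrt π * Real.exp (s * n)) := by
  have hN : (0:ℝ) < n := by exact_mod_cast hn
  have hsqrt : Real.sqrt (2*π*n) = Real.sqrt π * Real.sqrt (2*n) := by
    rw [← Real.sqrt_mul pi_pos.le]; ring_nf
  have hexp : s ^ n * Real.exp ((-Real.log s + s - 1) * n) = Real.exp (s*n) / Real.exp n := by
    have h1 : s ^ n = Real.exp ((n:ℝ) * Real.log s) := by
      rw [Real.exp_nat_mul, Real.exp_log hs0]
    rw [h1, ← Real.exp_add, ← Real.exp_sub]
    congr 1; ring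
  have hfac : (n ! : ℝ) = n * ((n-1)! : ℝ) := by
    exact_mod_cast (Nat.mul_factorial_pred (by omega)).symm
  have hne : (Real.exp 1) ^ n = Real.exp n := by
    rw [← Real.exp_nat_mul, mul_one]
  have hsn : (s*(n:ℝ))^n = s^n * n^n := mul_pow s n n
  have hpow2 : (s * (n:ℝ)) ^ (n-1) * (s * n) = s^n * (n:ℝ)^n := by
    rw [← pow_succ, Nat.sub_add_cancel hn, hsn]
  have hexp2 : s^n * Real.exp ((-Real.log s + s - 1) * n) * Real.exp n = Real.exp (s*n) := by
    rw [hexp, div_mul_cancel₀ _ (Real.exp_ne_zero _)]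
  rw [Stirling.stirlingSeq, div_pow, hne]
  have h2n : (0:ℝ) < Real.sqrt (2*n) := Real.sqrt_pos.2 (by positivity)
  have hπ : (0:ℝ) < Real.sqrt π := Real.sqrt_pos.2 pi_pos
  rw [hsqrt, hfac, div_eq_div_iff (by positivity) (by positivity)]
  field_simp
  rw [mul_comm (n:ℝ) (-Real.log s + s - 1)]
  linear_combination (-(Real.exp n * Real.exp ((-Real.log s + s - 1) * n))) * hpow2 +
    (-((n:ℝ)^n)) * hexp2

open Nat in
private lemma tail_bound (s : ℝ) (hs0 : 0 < s) (hs1 : s < 1) (n : ℕ) (hn : 1 ≤ n) :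
    Real.exp (s*n) - ∑ k ∈ Finset.range n, (s*n)^k / k ! ≤ (s*n)^n / n ! * (1-s)⁻¹ ∧
    0 ≤ Real.exp (s*n) - ∑ k ∈ Finset.range n, (s*n)^k / k ! := by
  set x := s * (n:ℝ) with hxdef
  have hN : (0:ℝ) < n := by exact_mod_cast hn
  have hx : 0 < x := by positivity
  have hsum := exp_hasSum x
  have hsummable : Summable (fun k : ℕ => x ^ k / k !) := hsum.summable
  have htailsum : Summable (fun j : ℕ => x ^ (j+n) / (j+n)!) :=
    ((summable_nat_add_iff n).2 hsummable)
  have hsplit : ∑ k ∈ Finset.range n, x ^ k / k ! + ∑' j, x ^ (j+n) / (j+n)! = Real.exp x := by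
    rw [Summable.sum_add_tsum_nat_add n hsummable, hsum.tsum_eq]
  have hterm : ∀ j : ℕ, x ^ (j+n) / (j+n)! ≤ x^n / n ! * s ^ j := by
    intro j
    have hfac : (n ! : ℝ) * (n:ℝ)^j ≤ ((j+n)! : ℝ) := by
      have h1 : n ! * n ^ j ≤ (j+n)! := by
        calc n ! * n ^ j ≤ n ! * (n+1) ^ j :=
              Nat.mul_le_mul_left _ (Nat.pow_le_pow_left (Nat.le_succ n) j)
          _ ≤ (n + j)! := Nat.factorial_mul_pow_le_factorial
          _ = (j + n)! := by rw [Nat.add_comm]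
      exact_mod_cast h1
    have h2 : x ^ (j+n) / ((j+n)! : ℝ) ≤ x ^ (j+n) / ((n ! : ℝ) * n ^ j) :=
      div_le_div_of_nonneg_left (by positivity) (by positivity) hfac
    refine h2.trans_eq ?_
    rw [pow_add, hxdef, mul_pow]
    field_simp
  have htail_le : ∑' j, x ^ (j+n) / (j+n)! ≤ x^n / n ! * (1-s)⁻¹ := by
    have hgeo : Summable (fun j : ℕ => x^n / n ! * s ^ j) :=
      (summable_geometric_of_lt_one hs0.le hs1).mul_left _
    calc ∑' j, x ^ (j+n) / (j+n)! ≤ ∑' j, x^n / n ! * s ^ j :=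
          Summable.tsum_le_tsum hterm htailsum hgeo
      _ = x^n / n ! * (1-s)⁻¹ := by
          rw [tsum_mul_left, tsum_geometric_of_lt_one hs0.le hs1]
  constructor
  · nlinarith [htail_le, hsplit]
  · have htail_nonneg : 0 ≤ ∑' j, x ^ (j+n) / (j+n)! :=
      tsum_nonneg fun j => by positivity
    linarith [hsplit]

open Nat in
private lemma pow_div_factorial_le (n : ℕ) : ((n:ℝ)^n / n !) ≤ Real.exp n := by
  calc ((n:ℝ)^n / n !) ≤ ∑ k ∈ Finset.range (n+1), (n:ℝ)^k / k ! := by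
        refine Finset.single_le_sum (f := fun k => ((n:ℝ))^k / k !)
          (fun i _ => by positivity) (Finset.self_mem_range_succ n)
    _ ≤ Real.exp n := Real.sum_le_exp_of_nonneg (Nat.cast_nonneg n) _

open Nat in
private lemma sum_div_exp_tendsto (s : ℝ) (hs0 : 0 < s) (hs1 : s < 1) :
    Filter.Tendsto (fun n : ℕ => (∑ k ∈ Finset.range n, (s*n)^k / k !) / Real.exp (s*n))
      Filter.atTop (nhds 1) := by
  set r : ℝ := s * Real.exp (1 - s) with hr
  have hr0 : 0 ≤ r := by positivity
  have hr1 : r < 1 := by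
    have hlt : Real.log s < s - 1 := Real.log_lt_sub_one_of_pos hs0 hs1.ne
    have : r = Real.exp (Real.log s + (1 - s)) := by
      rw [Real.exp_add, Real.exp_log hs0]
    rw [this]; nth_rewrite 2 [← Real.exp_zero]
    exact Real.exp_lt_exp.2 (by linarith)
  have hD : Filter.Tendsto (fun n : ℕ => 1 - (1-s)⁻¹ * r ^ n) Filter.atTop (nhds 1) := by
    have := (tendsto_pow_atTop_nhds_zero_of_lt_one hr0 hr1).const_mul (1-s)⁻¹
    have h2 := tendsto_const_nhds (α := ℕ) (f := Filter.atTop) (x := (1:ℝ)) |>.sub this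
    simpa using h2
  refine tendsto_of_tendsto_of_tendsto_of_le_of_le' hD tendsto_const_nhds ?_ ?_
  · filter_upwards [Filter.eventually_ge_atTop 1] with n hn
    have hN : (0:ℝ) < n := by exact_mod_cast hn
    have hb := tail_bound s hs0 hs1 n hn
    have hexp_pos : (0:ℝ) < Real.exp (s*n) := Real.exp_pos _
    have hstep : (s*(n:ℝ))^n / n ! ≤ r ^ n * Real.exp (s*n) := by
      have h1 : (s*(n:ℝ))^n = s^n * (n:ℝ)^n := mul_pow _ _ _
      have h2 : ((n:ℝ)^n / n !) ≤ Real.exp n := pow_div_factorial_le n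
      have h3 : Real.exp (n:ℝ) = Real.exp (1-s)^n * Real.exp (s*n) := by
        rw [← Real.exp_nat_mul, ← Real.exp_add]; congr 1; ring
      have hfpos : (0:ℝ) < n ! := by exact_mod_cast Nat.factorial_pos n
      rw [h1, hr, mul_pow, div_eq_mul_inv, mul_assoc, ← div_eq_mul_inv]
      calc s^n * ((n:ℝ)^n / n !) ≤ s^n * Real.exp n := by
            exact mul_le_mul_of_nonneg_left h2 (by positivity)
        _ = s^n * (Real.exp (1-s)^n * Real.exp (s*n)) := by rw [h3]
        _ = s^n * Real.exp (1-s)^n * Real.exp (s*n) := by ring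
    have hsum_ge : Real.exp (s*n) - (s*n)^n / n ! * (1-s)⁻¹ ≤
        ∑ k ∈ Finset.range n, (s*n)^k / k ! := by
      linarith [hb.1]
    rw [le_div_iff₀ hexp_pos]
    have h1s : (0:ℝ) < (1-s)⁻¹ := by
      have : (0:ℝ) < 1 - s := by linarith
      positivity
    nlinarith [hsum_ge, hstep]
  · filter_upwards [Filter.eventually_ge_atTop 1] with n hn
    have hb := tail_bound s hs0 hs1 n hn
    have hexp_pos : (0:ℝ) < Real.exp (s*n) := Real.exp_pos _
    rw [div_le_one hexp_pos]
    linarith [hb.2]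

theorem chi_supercritical_fixed_s (s : ℝ) (hs0 : 0 < s) (hs1 : s < 1) :
    Tendsto
      (fun n : ℕ =>
        chi n (1 / (s * n)) /
          (s * Real.sqrt (2 * π * n) * Real.exp ((|Real.log s| + s - 1) * n)))
      atTop (nhds 1) ∧
    0 < |Real.log s| + s - 1 := by
  have hlog : Real.log s < 0 := Real.log_neg hs0 hs1
  have habs : |Real.log s| = -Real.log s := abs_of_neg hlog
  have hlt : Real.log s < s - 1 := Real.log_lt_sub_one_of_pos hs0 hs1.ne
  refine ⟨?_, by rw [habs]; linarith⟩
  have hπ : (0:ℝ) < Real.sqrt π := Real.sqrt_pos.2 pi_pos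
  have hA : Tendsto (fun n => Stirling.stirlingSeq n / Real.sqrt π) atTop (nhds 1) := by
    have h := Stirling.tendsto_stirlingSeq_sqrt_pi.div_const (Real.sqrt π)
    rwa [div_self hπ.ne'] at h
  have hT := sum_div_exp_tendsto s hs0 hs1
  have hmul := hA.mul hT
  rw [mul_one] at hmul
  refine Tendsto.congr' ?_ hmul
  filter_upwards [eventually_ge_atTop 1] with n hn
  have hN : (0:ℝ) < n := by exact_mod_cast hn
  have hx : (0:ℝ) < s * n := by positivity
  rw [habs, chi_eq (s*n) hx n]
  have h := ratio_eq s hs0 n hn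
  have hsplit : (Nat.factorial (n-1) : ℝ) / (s*n) ^ (n-1) *
      (∑ k ∈ Finset.range n, (s*n)^k / (Nat.factorial k : ℝ)) /
      (s * Real.sqrt (2*π*n) * Real.exp ((-Real.log s + s - 1) * n)) =
      ((Nat.factorial (n-1) : ℝ) / (s*n) ^ (n-1) /
        (s * Real.sqrt (2*π*n) * Real.exp ((-Real.log s + s - 1) * n))) *
      (∑ k ∈ Finset.range n, (s*n)^k / (Nat.factorial k : ℝ)) := by ring
  rw [hsplit, h]
  ring
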